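/- The 3rd order Reed-Muller code R(3,7) has no self-dual neighbor of length 128 with minimum distance d for d ∈ {20, 24}; that is, there is no self-dual binary code C' ⊆ GF(2)^128 with dim(R(3,7) ∩ C') = 63 whose minimum distance is 20 or 24. -/

import Mathlib

noncomputable section

/-- Evaluation of multivariate polynomials over GF(2) as a linear map. -/
def evalLM (m : ℕ) :
    MvPolynomial (Fin m) (ZMod 2) →ₗ[ZMod 2] ((Fin m → ZMod 2) → ZMod 2) where
  toFun p := fun v => MvPolynomial.eval v p
  map_add' p q := by funext v; simp
  map_smul' c p := by funext v; simp [MvPolynomial.smul_eval]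

/-- The Reed-Muller code R(r,m): evaluation vectors of polynomials of total degree ≤ r. -/
def ReedMuller (r m : ℕ) : Submodule (ZMod 2) ((Fin m → ZMod 2) → ZMod 2) :=
  (MvPolynomial.restrictTotalDegree (Fin m) (ZMod 2) r).map (evalLM m)

/-- The dual code with respect to the standard dot product. -/
def dualCode {ι : Type*} [Fintype ι] (C : Submodule (ZMod 2) (ι → ZMod 2)) :
    Submodule (ZMod 2) (ι → ZMod 2) where
  carrier := {x | ∀ c ∈ C, dotProduct x c = 0}
  add_mem' := by
    intro a b ha hb c hc
    simp only [Set.mem_setOf_eq] at *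
    rw [add_dotProduct, ha c hc, hb c hc, add_zero]
  zero_mem' := by
    intro c hc
    simp [zero_dotProduct]
  smul_mem' := by
    intro a x hx c hc
    simp only [Set.mem_setOf_eq] at *
    rw [smul_dotProduct, hx c hc, smul_zero]

/-- The weight distribution: A_i = number of codewords of Hamming weight i. -/
def wtDist {ι : Type*} [Fintype ι] (C : Submodule (ZMod 2) (ι → ZMod 2)) (i : ℕ) : ℕ :=
  Set.ncard {c : ι → ZMod 2 | c ∈ C ∧ hammingNorm c = i}

/-- The code C has minimum distance d. -/
def IsMinDist {ι : Type*} [Fintype ι] (C : Submodule (ZMod 2) (ι → ZMod 2)) (d : ℕ) : Prop :=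
  (∃ c ∈ C, c ≠ 0 ∧ hammingNorm c = d) ∧ ∀ c ∈ C, c ≠ 0 → d ≤ hammingNorm c

/-- Vectors orthogonal to a fixed vector x. -/
def perpVec {ι : Type*} [Fintype ι] (x : ι → ZMod 2) : Submodule (ZMod 2) (ι → ZMod 2) where
  carrier := {c | dotProduct x c = 0}
  add_mem' := by
    intro a b ha hb
    simp only [Set.mem_setOf_eq] at *
    rw [dotProduct_add, ha, hb, add_zero]
  zero_mem' := by simp [dotProduct_zero]
  smul_mem' := by
    intro a c hc
    simp only [Set.mem_setOf_eq] at *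
    rw [dotProduct_smul, hc, smul_zero]

/-- The automorphism group of a code: coordinate permutations preserving the code. -/
def codeAut {ι : Type*} [Fintype ι] (C : Submodule (ZMod 2) (ι → ZMod 2)) :
    Subgroup (Equiv.Perm ι) where
  carrier := {σ | ∀ c : ι → ZMod 2, c ∈ C ↔ c ∘ σ ∈ C}
  one_mem' := by intro c; rfl
  mul_mem' := by
    intro σ τ hσ hτ c
    exact (hσ c).trans (hτ (c ∘ σ))
  inv_mem' := by
    intro σ hσ c
    have h := hσ (c ∘ ⇑(σ⁻¹))
    have e : (c ∘ ⇑(σ⁻¹)) ∘ ⇑σ = c := by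
      funext v; simp
    rw [e] at h
    exact h.symm



open MvPolynomial

lemma zmod2_pow (x : ZMod 2) : ∀ n : ℕ, n ≠ 0 → x ^ n = x := by
  intro n hn
  induction n with
  | zero => exact absurd rfl hn
  | succ m ih =>
    have hx : ∀ y : ZMod 2, y * y = y := by decide
    rcases Nat.eq_zero_or_pos m with h | h
    · subst h; exact pow_one x
    · rw [pow_succ, ih h.ne', hx x]

noncomputable def rmT : Finset ((Fin 7 → ZMod 2) → ZMod 2) := by
  classical
  exact (Finset.univ.filter (fun s : Finset (Fin 7) => s.card ≤ 3)).image
    (fun s => fun v : Fin 7 → ZMod 2 => ∏ i ∈ s, v i)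

lemma rmT_card : rmT.card ≤ 64 := by
  classical
  refine (Finset.card_image_le).trans ?_
  have : (Finset.univ.filter (fun s : Finset (Fin 7) => s.card ≤ 3)).card = 64 := by decide
  omega

lemma rm_le_span : ReedMuller 3 7 ≤ Submodule.span (ZMod 2) (rmT : Set _) := by
  rintro f ⟨p, hp, rfl⟩
  rw [SetLike.mem_coe, MvPolynomial.mem_restrictTotalDegree] at hp
  have hrep : evalLM 7 p = ∑ d ∈ p.support, (evalLM 7) (monomial d (coeff d p)) := by
    rw [← map_sum, MvPolynomial.support_sum_monomial_coeff]
  rw [hrep]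
  apply Submodule.sum_mem
  intro d hd
  have hcard : d.support.card ≤ 3 := by
    have h1 : d.support.card ≤ d.sum fun _ e => e := by
      rw [Finsupp.sum, Finset.card_eq_sum_ones]
      exact Finset.sum_le_sum fun i hi => Nat.one_le_iff_ne_zero.mpr (Finsupp.mem_support_iff.mp hi)
    exact h1.trans ((MvPolynomial.le_totalDegree hd).trans hp)
  have hg : (fun v : Fin 7 → ZMod 2 => ∏ i ∈ d.support, v i) ∈ rmT := by
    classical
    exact Finset.mem_image.mpr ⟨d.support, Finset.mem_filter.mpr ⟨Finset.mem_univ _, hcard⟩, rfl⟩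
  have heq : (evalLM 7) (monomial d (coeff d p)) =
      (coeff d p) • (fun v : Fin 7 → ZMod 2 => ∏ i ∈ d.support, v i) := by
    funext v
    simp only [evalLM, LinearMap.coe_mk, AddHom.coe_mk, eval_monomial, Pi.smul_apply, smul_eq_mul]
    congr 1
    rw [Finsupp.prod]
    exact Finset.prod_congr rfl fun i hi => zmod2_pow (v i) (d i) (Finsupp.mem_support_iff.mp hi)
  rw [heq]
  exact Submodule.smul_mem _ _ (Submodule.subset_span hg)

lemma rm_finrank_le : Module.finrank (ZMod 2) ↥(ReedMuller 3 7) ≤ 64 :=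
  (Submodule.finrank_mono rm_le_span).trans ((finrank_span_finset_le_card (R := ZMod 2) rmT).trans rmT_card)

/-- f1: indicator of the 4-flat x0=x1=x2=0. -/
def rmf1 : (Fin 7 → ZMod 2) → ZMod 2 := fun v => (v 0 + 1) * (v 1 + 1) * (v 2 + 1)
/-- f2: indicator of the 4-flat x0=x1=x3=0. -/
def rmf2 : (Fin 7 → ZMod 2) → ZMod 2 := fun v => (v 0 + 1) * (v 1 + 1) * (v 3 + 1)

lemma totdeg_aux (i : Fin 7) : (X i + 1 : MvPolynomial (Fin 7) (ZMod 2)).totalDegree ≤ 1 :=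
  (MvPolynomial.totalDegree_add _ _).trans (by simp [MvPolynomial.totalDegree_X])

lemma rm_mem_aux (i j k : Fin 7) :
    (fun v : Fin 7 → ZMod 2 => (v i + 1) * (v j + 1) * (v k + 1)) ∈ ReedMuller 3 7 := by
  refine ⟨(X i + 1) * (X j + 1) * (X k + 1), ?_, ?_⟩
  · rw [SetLike.mem_coe, MvPolynomial.mem_restrictTotalDegree]
    calc ((X i + 1) * (X j + 1) * (X k + 1) : MvPolynomial (Fin 7) (ZMod 2)).totalDegree
        ≤ ((X i + 1) * (X j + 1) : MvPolynomial (Fin 7) (ZMod 2)).totalDegree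
          + (X k + 1 : MvPolynomial (Fin 7) (ZMod 2)).totalDegree := MvPolynomial.totalDegree_mul _ _
      _ ≤ ((X i + 1 : MvPolynomial (Fin 7) (ZMod 2)).totalDegree
          + (X j + 1 : MvPolynomial (Fin 7) (ZMod 2)).totalDegree) + 1 :=
            Nat.add_le_add (MvPolynomial.totalDegree_mul _ _) (totdeg_aux k)
      _ ≤ 3 := by have := totdeg_aux i; have := totdeg_aux j; omega
  · funext v; simp [evalLM]

lemma rmf1_mem : rmf1 ∈ ReedMuller 3 7 := rm_mem_aux 0 1 2
lemma rmf2_mem : rmf2 ∈ ReedMuller 3 7 := rm_mem_aux 0 1 3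

lemma rmf1_norm : hammingNorm rmf1 = 16 := by decide
lemma rmf2_norm : hammingNorm rmf2 = 16 := by decide
lemma rmf3_norm : hammingNorm (rmf1 + rmf2) = 16 := by decide
lemma rmf1_ne : rmf1 ≠ 0 := by decide
lemma rmf2_ne : rmf2 ≠ 0 := by decide
lemma rmf3_ne : rmf1 + rmf2 ≠ 0 := by decide

/-- R(3,7) has no self-dual neighbor of minimum distance 20 or 24. -/
theorem reedMuller_3_7_no_selfdual_neighbor :
    ¬ ∃ C' : Submodule (ZMod 2) ((Fin 7 → ZMod 2) → ZMod 2),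
        dualCode C' = C' ∧
        Module.finrank (ZMod 2) ↥(ReedMuller 3 7 ⊓ C') = 63 ∧
        (IsMinDist C' 20 ∨ IsMinDist C' 24) := by
  rintro ⟨C', -, hdim, hd⟩
  have hmin : ∀ c ∈ C', c ≠ 0 → 17 ≤ hammingNorm c := by
    rcases hd with h | h
    · exact fun c hc h0 => le_trans (by norm_num) (h.2 c hc h0)
    · exact fun c hc h0 => le_trans (by norm_num) (h.2 c hc h0)
  -- it suffices to find a weight-16 nonzero codeword of C'
  suffices hex : ∃ w, w ∈ C' ∧ w ≠ 0 ∧ hammingNorm w = 16 by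
    obtain ⟨w, hw, h0, h16⟩ := hex
    have := hmin w hw h0
    omega
  by_cases h1 : rmf1 ∈ C'
  · exact ⟨rmf1, h1, rmf1_ne, rmf1_norm⟩
  by_cases h2 : rmf2 ∈ C'
  · exact ⟨rmf2, h2, rmf2_ne, rmf2_norm⟩
  by_cases h3 : rmf1 + rmf2 ∈ C'
  · exact ⟨rmf1 + rmf2, h3, rmf3_ne, rmf3_norm⟩
  exfalso
  set D := ReedMuller 3 7 ⊓ C' with hD
  have hf1D : rmf1 ∉ D := fun h => h1 h.2
  have hf2D : rmf2 ∉ D := fun h => h2 h.2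
  have hf3D : rmf1 + rmf2 ∉ D := fun h => h3 h.2
  have hlt1 : D < D ⊔ Submodule.span (ZMod 2) {rmf1} :=
    lt_of_le_of_ne le_sup_left (fun h => hf1D (h ▸ Submodule.mem_sup_right (Submodule.mem_span_singleton_self rmf1)))
  have hf2E : rmf2 ∉ D ⊔ Submodule.span (ZMod 2) {rmf1} := by
    intro h
    rw [Submodule.mem_sup] at h
    obtain ⟨y, hy, z, hz, hyz⟩ := h
    obtain ⟨a, rfl⟩ := Submodule.mem_span_singleton.mp hz
    have ha : a = 0 ∨ a = 1 := by
      have : ∀ b : ZMod 2, b = 0 ∨ b = 1 := by decide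
      exact this a
    rcases ha with rfl | rfl
    · rw [zero_smul, add_zero] at hyz; exact hf2D (hyz ▸ hy)
    · rw [one_smul] at hyz
      apply hf3D
      have hself : rmf1 + rmf1 = 0 := by
        funext v
        show rmf1 v + rmf1 v = 0
        have : ∀ x : ZMod 2, x + x = 0 := by decide
        exact this _
      have : rmf1 + rmf2 = y := by
        rw [← hyz, add_comm y rmf1, ← add_assoc, hself, zero_add]
      exact this ▸ hy
  have hlt2 : (D ⊔ Submodule.span (ZMod 2) {rmf1}) <
      (D ⊔ Submodule.span (ZMod 2) {rmf1}) ⊔ Submodule.span (ZMod 2) {rmf2} :=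
    lt_of_le_of_ne le_sup_left (fun h => hf2E (h ▸ Submodule.mem_sup_right (Submodule.mem_span_singleton_self rmf2)))
  have hle : (D ⊔ Submodule.span (ZMod 2) {rmf1}) ⊔ Submodule.span (ZMod 2) {rmf2} ≤ ReedMuller 3 7 := by
    refine sup_le (sup_le inf_le_left ?_) ?_
    · rw [Submodule.span_le, Set.singleton_subset_iff]; exact rmf1_mem
    · rw [Submodule.span_le, Set.singleton_subset_iff]; exact rmf2_mem
  have hr1 := Submodule.finrank_lt_finrank_of_lt hlt1
  have hr2 := Submodule.finrank_lt_finrank_of_lt hlt2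
  have hr3 := Submodule.finrank_mono hle
  have := rm_finrank_le
  omega


end
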